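/- Let φ : Y → NCP be the unique isomorphism of Catalan pairs from planar binary trees (with Catalan map (σ, τ) ↦ tree with left subtree σ and right subtree τ) to noncrossing partitions (with Catalan map (P, Q) ↦ P * (| ⊔̲ Q)). Then for all planar binary trees σ, τ: φ(σ / τ) = φ(σ) * φ(τ) and φ(σ \ τ) = φ(σ) ⊔̲ φ(τ), where σ / τ (over) grafts σ as the left child of the leftmost internal vertex of τ, and σ \ τ (under) grafts τ as the right child of the rightmost internal vertex of σ. -/

import Mathlib

/-- Planar binary trees. -/
inductive PBTree : Type
  | leaf : PBTree
  | node : PBTree → PBTree → PBTree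
deriving DecidableEq

namespace PBTree

/-- Number of internal vertices. -/
def size : PBTree → ℕ
  | .leaf => 0
  | .node l r => l.size + r.size + 1

end PBTree

/-- `r` is (the equivalence relation of) a noncrossing partition of `{0, …, n-1}`. -/
def IsNCPartition (n : ℕ) (r : ℕ → ℕ → Prop) : Prop :=
  (∀ i, r i i ↔ i < n) ∧
  (∀ i j, r i j → r j i) ∧
  (∀ i j k, r i j → r j k → r i k) ∧
  (∀ a b c d, a < b → b < c → c < d → r a c → r b d → r a b)

/-- The empty partition. -/
def emptyPart : ℕ → ℕ → Prop := fun _ _ => False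

/-- The partition `|` of a one-element set. -/
def onePart : ℕ → ℕ → Prop := fun i j => i = 0 ∧ j = 0

/-- Shift a partition by `m`. -/
def shiftPart (m : ℕ) (r : ℕ → ℕ → Prop) : ℕ → ℕ → Prop :=
  fun i j => m ≤ i ∧ m ≤ j ∧ r (i - m) (j - m)

/-- Concatenation `P * Q` of a partition `P` of `[m]` with a partition `Q`. -/
def concatPart (m : ℕ) (P Q : ℕ → ℕ → Prop) : ℕ → ℕ → Prop :=
  fun i j => P i j ∨ shiftPart m Q i j

/-- Right-merging `P ⊔̲ Q` of `P` of `[m]` with `Q` of `[n]`: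
merge the last block of `P` with the last block of `Q` in `P * Q`. -/
def rmergePart (m n : ℕ) (P Q : ℕ → ℕ → Prop) : ℕ → ℕ → Prop :=
  fun i j => concatPart m P Q i j ∨
    (P i (m - 1) ∧ shiftPart m Q j (m + n - 1)) ∨
    (shiftPart m Q i (m + n - 1) ∧ P j (m - 1))

/-- Left-merging `P ⊔̄ Q` of `P` of `[m]` with `Q`:
merge the first block of `P` with the first block of `Q` in `P * Q`. -/
def lmergePart (m : ℕ) (P Q : ℕ → ℕ → Prop) : ℕ → ℕ → Prop :=
  fun i j => concatPart m P Q i j ∨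
    (P i 0 ∧ shiftPart m Q j m) ∨
    (shiftPart m Q i m ∧ P j 0)

namespace PBTree

/-- The over-grafting `σ / τ`: graft `σ` as the left child of the leftmost internal
vertex of `τ` (with `σ / | = σ`). -/
def over_ : PBTree → PBTree → PBTree
  | σ, .leaf => σ
  | σ, .node l r => .node (over_ σ l) r

/-- The under-grafting `σ \ τ`: graft `τ` as the right child of the rightmost internal
vertex of `σ` (with `| \ τ = τ`). -/
def under : PBTree → PBTree → PBTree
  | .leaf, τ => τ
  | .node l r, τ => .node l (under r τ)

end PBTree

/-- The unique isomorphism of Catalan pairs `φ : Y → NCP`, determined by `φ(|) = ∅` and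
`φ(σ ∨ τ) = φ(σ) * (| ⊔̲ φ(τ))`. -/
def phi : PBTree → (ℕ → ℕ → Prop)
  | .leaf => emptyPart
  | .node σ τ => concatPart σ.size (phi σ) (rmergePart 1 τ.size onePart (phi τ))


lemma phi_supp : ∀ (σ : PBTree) (i j : ℕ), phi σ i j → i < σ.size ∧ j < σ.size := by
  intro σ
  induction σ with
  | leaf => intro i j h; exact absurd h (by simp [phi, emptyPart])
  | node l r ihl ihr =>
    intro i j h
    simp only [phi, concatPart, rmergePart, shiftPart, onePart, PBTree.size] at h ⊢
    rcases h with h | ⟨hi, hj, ((⟨h1, h2⟩ | ⟨h1, h2, h3⟩) | ⟨⟨h1, -⟩, h2, h3, h4⟩ |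
      ⟨⟨h2, h3, h4⟩, h1, -⟩)⟩
    · have := ihl _ _ h; omega
    · omega
    · have := ihr _ _ h3; omega
    · have := ihr _ _ h4; omega
    · have := ihr _ _ h4; omega

lemma phi_refl : ∀ (σ : PBTree) (i : ℕ), i < σ.size → phi σ i i := by
  intro σ
  induction σ with
  | leaf => intro i h; simp [PBTree.size] at h
  | node l r ihl ihr =>
    intro i h
    simp only [phi, concatPart, rmergePart, shiftPart, onePart, PBTree.size] at h ⊢
    rcases lt_trichotomy i l.size with hc | hc | hc
    · exact Or.inl (ihl _ hc)
    · exact Or.inr ⟨by omega, by omega, Or.inl (Or.inl ⟨by omega, by omega⟩)⟩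
    · refine Or.inr ⟨by omega, by omega, Or.inl (Or.inr ⟨by omega, by omega, ?_⟩)⟩
      exact ihr _ (by omega)

/-- `i` is in the last block of `rmergePart 1 k onePart Q`, shifted by `m`, other than `m`. -/
def QLast (m k : ℕ) (Q : ℕ → ℕ → Prop) (i : ℕ) : Prop :=
  m + 1 ≤ i ∧ 1 ≤ k ∧ Q (i - (m + 1)) (k - 1)

def RLast (m k n : ℕ) (R : ℕ → ℕ → Prop) (i : ℕ) : Prop :=
  m + k + 1 ≤ i ∧ 1 ≤ n ∧ R (i - (m + k + 1)) (n - 1)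

inductive Big (m k n : ℕ) (P Q R : ℕ → ℕ → Prop) : ℕ → ℕ → Prop
  | base {i j} : P i j → Big m k n P Q R i j
  | mm {i j} : i = m → j = m → Big m k n P Q R i j
  | qq {i j} : m + 1 ≤ i → m + 1 ≤ j → Q (i - (m+1)) (j - (m+1)) → Big m k n P Q R i j
  | rr {i j} : m + k + 1 ≤ i → m + k + 1 ≤ j → R (i - (m+k+1)) (j - (m+k+1)) →
      Big m k n P Q R i j
  | mq {i j} : i = m → QLast m k Q j → Big m k n P Q R i j
  | qm {i j} : QLast m k Q i → j = m → Big m k n P Q R i j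
  | mr {i j} : i = m → RLast m k n R j → Big m k n P Q R i j
  | rm {i j} : RLast m k n R i → j = m → Big m k n P Q R i j
  | qr {i j} : QLast m k Q i → RLast m k n R j → Big m k n P Q R i j
  | rq {i j} : RLast m k n R i → QLast m k Q j → Big m k n P Q R i j

lemma rhs_iff (m k n : ℕ) (P Q R : ℕ → ℕ → Prop)
    (hPs : ∀ i j, P i j → i < m ∧ j < m)
    (hQr : ∀ i, i < k → Q i i) (i j : ℕ) :
    rmergePart (m+k+1) n (concatPart m P (rmergePart 1 k onePart Q)) R i j ↔
      Big m k n P Q R i j := by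
  simp only [rmergePart, concatPart, shiftPart, onePart, Nat.add_sub_cancel,
    Nat.add_sub_cancel_left]
  constructor
  · rintro ((((hP | ⟨hi, hj, (⟨e1, e2⟩ | ⟨h1, h2, hQ⟩) | ⟨⟨e1, -⟩, h2, hk, hQ⟩ |
        ⟨⟨h1, hk, hQ⟩, e2, -⟩⟩) | ⟨hi, hj, hR⟩)) |
      ⟨hC, hj, hjn, hR⟩ | ⟨⟨hi, hin, hR⟩, hC⟩)
    · exact Big.base hP
    · exact Big.mm (by omega) (by omega)
    · refine Big.qq (by omega) (by omega) ?_
      rw [show i - (m+1) = i - m - 1 by omega, show j - (m+1) = j - m - 1 by omega]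
      exact hQ
    · exact Big.mq (by omega)
        ⟨by omega, hk, by rw [show j - (m+1) = j - m - 1 by omega]; exact hQ⟩
    · exact Big.qm
        ⟨by omega, hk, by rw [show i - (m+1) = i - m - 1 by omega]; exact hQ⟩ (by omega)
    · exact Big.rr hi hj hR
    · rw [show m + k + 1 + n - 1 - (m + k + 1) = n - 1 by omega] at hR
      have hRL : RLast m k n R j := ⟨hj, by omega, hR⟩
      rcases hC with hP | ⟨hi, -, (⟨e1, ek⟩ | ⟨h1, hk, hQ⟩) | ⟨⟨e1, -⟩, -, hk, hQ⟩ |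
        ⟨⟨h1, hk, hQ⟩, ek, -⟩⟩
      · have := (hPs _ _ hP).2; omega
      · exact Big.mr (by omega) hRL
      · exact Big.qr ⟨by omega, hk, by rw [show i - (m+1) = i - m - 1 by omega]; exact hQ⟩ hRL
      · exact Big.mr (by omega) hRL
      · omega
    · rw [show m + k + 1 + n - 1 - (m + k + 1) = n - 1 by omega] at hR
      have hRL : RLast m k n R i := ⟨hi, by omega, hR⟩
      rcases hC with hP | ⟨hj, -, (⟨e1, ek⟩ | ⟨h1, hk, hQ⟩) | ⟨⟨e1, -⟩, -, hk, hQ⟩ |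
        ⟨⟨h1, hk, hQ⟩, ek, -⟩⟩
      · have := (hPs _ _ hP).2; omega
      · exact Big.rm hRL (by omega)
      · exact Big.rq hRL ⟨by omega, hk, by rw [show j - (m+1) = j - m - 1 by omega]; exact hQ⟩
      · exact Big.rm hRL (by omega)
      · omega
  · intro hb
    cases hb with
    | base h => exact Or.inl (Or.inl (Or.inl h))
    | mm hi hj =>
        rw [hi, hj]
        exact Or.inl (Or.inl (Or.inr ⟨le_refl m, le_refl m,
          Or.inl (Or.inl ⟨by omega, by omega⟩)⟩))
    | qq h1 h2 hQ =>
        refine Or.inl (Or.inl (Or.inr ⟨by omega, by omega,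
          Or.inl (Or.inr ⟨by omega, by omega, ?_⟩)⟩))
        rw [show i - m - 1 = i - (m+1) by omega, show j - m - 1 = j - (m+1) by omega]
        exact hQ
    | rr h1 h2 hR => exact Or.inl (Or.inr ⟨h1, h2, hR⟩)
    | mq hi hQL =>
        rw [hi]
        obtain ⟨h1, hk, hQ⟩ := hQL
        refine Or.inl (Or.inl (Or.inr ⟨le_refl m, by omega,
          Or.inr (Or.inl ⟨⟨by omega, trivial⟩, by omega, hk, ?_⟩)⟩))
        rw [show j - m - 1 = j - (m+1) by omega]
        exact hQ
    | qm hQL hj =>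
        rw [hj]
        obtain ⟨h1, hk, hQ⟩ := hQL
        refine Or.inl (Or.inl (Or.inr ⟨by omega, le_refl m,
          Or.inr (Or.inr ⟨⟨by omega, hk, ?_⟩, by omega, trivial⟩)⟩))
        rw [show i - m - 1 = i - (m+1) by omega]
        exact hQ
    | mr hi hRL =>
        rw [hi]
        obtain ⟨h2, hn, hR⟩ := hRL
        refine Or.inr (Or.inl ⟨Or.inr ⟨le_refl m, by omega, ?_⟩, h2, by omega, ?_⟩)
        · rcases Nat.eq_zero_or_pos k with hk0 | hk1
          · exact Or.inl (Or.inl ⟨by omega, by omega⟩)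
          · exact Or.inr (Or.inl ⟨⟨by omega, trivial⟩, hk1, hk1, hQr _ (by omega)⟩)
        · rw [show m + k + 1 + n - 1 - (m + k + 1) = n - 1 by omega]
          exact hR
    | rm hRL hj =>
        rw [hj]
        obtain ⟨h2, hn, hR⟩ := hRL
        refine Or.inr (Or.inr ⟨⟨h2, by omega, ?_⟩, Or.inr ⟨le_refl m, by omega, ?_⟩⟩)
        · rw [show m + k + 1 + n - 1 - (m + k + 1) = n - 1 by omega]
          exact hR
        · rcases Nat.eq_zero_or_pos k with hk0 | hk1
          · exact Or.inl (Or.inl ⟨by omega, by omega⟩)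
          · exact Or.inr (Or.inl ⟨⟨by omega, trivial⟩, hk1, hk1, hQr _ (by omega)⟩)
    | qr hQL hRL =>
        obtain ⟨h1, hk, hQ⟩ := hQL
        obtain ⟨h2, hn, hR⟩ := hRL
        refine Or.inr (Or.inl ⟨Or.inr ⟨by omega, by omega,
          Or.inl (Or.inr ⟨by omega, hk, ?_⟩)⟩, h2, by omega, ?_⟩)
        · rw [show i - m - 1 = i - (m+1) by omega]
          exact hQ
        · rw [show m + k + 1 + n - 1 - (m + k + 1) = n - 1 by omega]
          exact hR
    | rq hRL hQL =>
        obtain ⟨h1, hk, hQ⟩ := hQL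
        obtain ⟨h2, hn, hR⟩ := hRL
        refine Or.inr (Or.inr ⟨⟨h2, by omega, ?_⟩, Or.inr ⟨by omega, by omega,
          Or.inl (Or.inr ⟨by omega, hk, ?_⟩)⟩⟩)
        · rw [show m + k + 1 + n - 1 - (m + k + 1) = n - 1 by omega]
          exact hR
        · rw [show j - m - 1 = j - (m+1) by omega]
          exact hQ

lemma lhs_iff (m k n : ℕ) (P Q R : ℕ → ℕ → Prop)
    (hQs : ∀ i j, Q i j → i < k ∧ j < k)
    (hRs : ∀ i j, R i j → i < n ∧ j < n)
    (hRr : ∀ i, i < n → R i i) (i j : ℕ) :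
    concatPart m P (rmergePart 1 (k+n) onePart (rmergePart k n Q R)) i j ↔
      Big m k n P Q R i j := by
  simp only [rmergePart, concatPart, shiftPart, onePart, Nat.add_sub_cancel,
    Nat.add_sub_cancel_left]
  constructor
  · rintro (hP | ⟨hi, hj, (⟨e1, e2⟩ | ⟨h1, h2, hX⟩) | ⟨⟨e1, -⟩, h2, hkn, hX⟩ |
      ⟨⟨h1, hkn, hX⟩, e2, -⟩⟩)
    · exact Big.base hP
    · exact Big.mm (by omega) (by omega)
    · rcases hX with (hQ | ⟨hx, hy, hR⟩) | ⟨hQ, hy, hyn, hR⟩ | ⟨⟨hx, hxn, hR⟩, hQ⟩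
      · refine Big.qq (by omega) (by omega) ?_
        rw [show i - (m+1) = i - m - 1 by omega, show j - (m+1) = j - m - 1 by omega]
        exact hQ
      · refine Big.rr (by omega) (by omega) ?_
        rw [show i - (m+k+1) = i - m - 1 - k by omega,
          show j - (m+k+1) = j - m - 1 - k by omega]
        exact hR
      · have hk1 : 1 ≤ k := by have := (hQs _ _ hQ).2; omega
        have hn1 : 1 ≤ n := by have := (hRs _ _ hR).2; omega
        refine Big.qr ⟨by omega, hk1, ?_⟩ ⟨by omega, hn1, ?_⟩
        · rw [show i - (m+1) = i - m - 1 by omega]; exact hQ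
        · rw [show j - (m+k+1) = j - m - 1 - k by omega,
            show n - 1 = k + n - 1 - k by omega]
          exact hR
      · have hk1 : 1 ≤ k := by have := (hQs _ _ hQ).2; omega
        have hn1 : 1 ≤ n := by have := (hRs _ _ hR).2; omega
        refine Big.rq ⟨by omega, hn1, ?_⟩ ⟨by omega, hk1, ?_⟩
        · rw [show i - (m+k+1) = i - m - 1 - k by omega,
            show n - 1 = k + n - 1 - k by omega]
          exact hR
        · rw [show j - (m+1) = j - m - 1 by omega]; exact hQ
    · rcases hX with (hQ | ⟨hx, hy, hR⟩) | ⟨hQ, hy, hyn, hR⟩ | ⟨⟨hx, hxn, hR⟩, hQ⟩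
      · have hb := (hQs _ _ hQ).2
        refine Big.mq (by omega) ⟨by omega, by omega, ?_⟩
        rw [show j - (m+1) = j - m - 1 by omega, show k - 1 = k + n - 1 by omega]
        exact hQ
      · have hn1 : 1 ≤ n := by have := (hRs _ _ hR).2; omega
        refine Big.mr (by omega) ⟨by omega, hn1, ?_⟩
        rw [show j - (m+k+1) = j - m - 1 - k by omega,
          show n - 1 = k + n - 1 - k by omega]
        exact hR
      · have hk1 : 1 ≤ k := by have := (hQs _ _ hQ).2; omega
        refine Big.mq (by omega) ⟨by omega, hk1, ?_⟩
        rw [show j - (m+1) = j - m - 1 by omega]; exact hQ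
      · have := (hQs _ _ hQ).1
        have := (hRs _ _ hR).2
        omega
    · rcases hX with (hQ | ⟨hx, hy, hR⟩) | ⟨hQ, hy, hyn, hR⟩ | ⟨⟨hx, hxn, hR⟩, hQ⟩
      · have hb := (hQs _ _ hQ).2
        refine Big.qm ⟨by omega, by omega, ?_⟩ (by omega)
        rw [show i - (m+1) = i - m - 1 by omega, show k - 1 = k + n - 1 by omega]
        exact hQ
      · have hn1 : 1 ≤ n := by have := (hRs _ _ hR).2; omega
        refine Big.rm ⟨by omega, hn1, ?_⟩ (by omega)
        rw [show i - (m+k+1) = i - m - 1 - k by omega,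
          show n - 1 = k + n - 1 - k by omega]
        exact hR
      · have hk1 : 1 ≤ k := by have := (hQs _ _ hQ).2; omega
        refine Big.qm ⟨by omega, hk1, ?_⟩ (by omega)
        rw [show i - (m+1) = i - m - 1 by omega]; exact hQ
      · have := (hQs _ _ hQ).1
        have := (hRs _ _ hR).2
        omega
  · intro hb
    cases hb with
    | base h => exact Or.inl h
    | mm hi hj =>
        rw [hi, hj]
        exact Or.inr ⟨le_refl m, le_refl m, Or.inl (Or.inl ⟨by omega, by omega⟩)⟩
    | qq h1 h2 hQ =>
        refine Or.inr ⟨by omega, by omega, Or.inl (Or.inr ⟨by omega, by omega,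
          Or.inl (Or.inl ?_)⟩)⟩
        rw [show i - m - 1 = i - (m+1) by omega, show j - m - 1 = j - (m+1) by omega]
        exact hQ
    | rr h1 h2 hR =>
        refine Or.inr ⟨by omega, by omega, Or.inl (Or.inr ⟨by omega, by omega,
          Or.inl (Or.inr ⟨by omega, by omega, ?_⟩)⟩)⟩
        rw [show i - m - 1 - k = i - (m+k+1) by omega,
          show j - m - 1 - k = j - (m+k+1) by omega]
        exact hR
    | mq hi hQL =>
        rw [hi]
        obtain ⟨h1, hk, hQ⟩ := hQL
        rcases Nat.eq_zero_or_pos n with hn0 | hn1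
        · refine Or.inr ⟨le_refl m, by omega, Or.inr (Or.inl ⟨⟨by omega, trivial⟩,
            by omega, by omega, Or.inl (Or.inl ?_)⟩)⟩
          rw [show j - m - 1 = j - (m+1) by omega, show k + n - 1 = k - 1 by omega]
          exact hQ
        · refine Or.inr ⟨le_refl m, by omega, Or.inr (Or.inl ⟨⟨by omega, trivial⟩,
            by omega, by omega, Or.inr (Or.inl ⟨?_, by omega, by omega, ?_⟩)⟩)⟩
          · rw [show j - m - 1 = j - (m+1) by omega]; exact hQ
          · rw [show k + n - 1 - k = n - 1 by omega]; exact hRr _ (by omega)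
    | qm hQL hj =>
        rw [hj]
        obtain ⟨h1, hk, hQ⟩ := hQL
        rcases Nat.eq_zero_or_pos n with hn0 | hn1
        · refine Or.inr ⟨by omega, le_refl m, Or.inr (Or.inr ⟨⟨by omega, by omega,
            Or.inl (Or.inl ?_)⟩, by omega, trivial⟩)⟩
          rw [show i - m - 1 = i - (m+1) by omega, show k + n - 1 = k - 1 by omega]
          exact hQ
        · refine Or.inr ⟨by omega, le_refl m, Or.inr (Or.inr ⟨⟨by omega, by omega,
            Or.inr (Or.inl ⟨?_, by omega, by omega, ?_⟩)⟩, by omega, trivial⟩)⟩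
          · rw [show i - m - 1 = i - (m+1) by omega]; exact hQ
          · rw [show k + n - 1 - k = n - 1 by omega]; exact hRr _ (by omega)
    | mr hi hRL =>
        rw [hi]
        obtain ⟨h2, hn, hR⟩ := hRL
        refine Or.inr ⟨le_refl m, by omega, Or.inr (Or.inl ⟨⟨by omega, trivial⟩,
          by omega, by omega, Or.inl (Or.inr ⟨by omega, by omega, ?_⟩)⟩)⟩
        rw [show j - m - 1 - k = j - (m+k+1) by omega,
          show k + n - 1 - k = n - 1 by omega]
        exact hR
    | rm hRL hj =>
        rw [hj]
        obtain ⟨h2, hn, hR⟩ := hRL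
        refine Or.inr ⟨by omega, le_refl m, Or.inr (Or.inr ⟨⟨by omega, by omega,
          Or.inl (Or.inr ⟨by omega, by omega, ?_⟩)⟩, by omega, trivial⟩)⟩
        rw [show i - m - 1 - k = i - (m+k+1) by omega,
          show k + n - 1 - k = n - 1 by omega]
        exact hR
    | qr hQL hRL =>
        obtain ⟨h1, hk, hQ⟩ := hQL
        obtain ⟨h2, hn, hR⟩ := hRL
        refine Or.inr ⟨by omega, by omega, Or.inl (Or.inr ⟨by omega, by omega,
          Or.inr (Or.inl ⟨?_, by omega, by omega, ?_⟩)⟩)⟩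
        · rw [show i - m - 1 = i - (m+1) by omega]; exact hQ
        · rw [show j - m - 1 - k = j - (m+k+1) by omega,
            show k + n - 1 - k = n - 1 by omega]
          exact hR
    | rq hRL hQL =>
        obtain ⟨h1, hk, hQ⟩ := hQL
        obtain ⟨h2, hn, hR⟩ := hRL
        refine Or.inr ⟨by omega, by omega, Or.inl (Or.inr ⟨by omega, by omega,
          Or.inr (Or.inr ⟨⟨by omega, by omega, ?_⟩, ?_⟩)⟩)⟩
        · rw [show i - m - 1 - k = i - (m+k+1) by omega,
            show k + n - 1 - k = n - 1 by omega]
          exact hR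
        · rw [show j - m - 1 = j - (m+1) by omega]; exact hQ

lemma key (m k n : ℕ) (P Q R : ℕ → ℕ → Prop)
    (hPs : ∀ i j, P i j → i < m ∧ j < m)
    (hQs : ∀ i j, Q i j → i < k ∧ j < k) (hQr : ∀ i, i < k → Q i i)
    (hRs : ∀ i j, R i j → i < n ∧ j < n) (hRr : ∀ i, i < n → R i i) :
    concatPart m P (rmergePart 1 (k+n) onePart (rmergePart k n Q R)) =
      rmergePart (m+k+1) n (concatPart m P (rmergePart 1 k onePart Q)) R := by
  funext i j
  exact propext ((lhs_iff m k n P Q R hQs hRs hRr i j).trans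
    (rhs_iff m k n P Q R hPs hQr i j).symm)

lemma size_over (σ τ : PBTree) : (σ.over_ τ).size = σ.size + τ.size := by
  induction τ with
  | leaf => simp [PBTree.over_, PBTree.size]
  | node l r ihl ihr =>
      show ((σ.over_ l).node r).size = _
      simp only [PBTree.size, ihl]
      omega

lemma size_under (σ τ : PBTree) : (σ.under τ).size = σ.size + τ.size := by
  induction σ with
  | leaf => simp [PBTree.under, PBTree.size]
  | node l r ihl ihr =>
      show (l.node (r.under τ)).size = _
      simp only [PBTree.size, ihr]
      omega

lemma concat_assoc (m u : ℕ) (P U Z : ℕ → ℕ → Prop) :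
    concatPart (m + u) (concatPart m P U) Z = concatPart m P (concatPart u U Z) := by
  funext i j
  apply propext
  simp only [concatPart, shiftPart]
  constructor
  · rintro ((hP | ⟨hi, hj, hU⟩) | ⟨hi, hj, hZ⟩)
    · exact Or.inl hP
    · exact Or.inr ⟨hi, hj, Or.inl hU⟩
    · refine Or.inr ⟨by omega, by omega, Or.inr ⟨by omega, by omega, ?_⟩⟩
      rw [show i - m - u = i - (m + u) by omega, show j - m - u = j - (m + u) by omega]
      exact hZ
  · rintro (hP | ⟨hi, hj, hU | ⟨hi', hj', hZ⟩⟩)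
    · exact Or.inl (Or.inl hP)
    · exact Or.inl (Or.inr ⟨hi, hj, hU⟩)
    · refine Or.inr ⟨by omega, by omega, ?_⟩
      rw [show i - (m + u) = i - m - u by omega, show j - (m + u) = j - m - u by omega]
      exact hZ

lemma concat_empty (m : ℕ) (P : ℕ → ℕ → Prop) : concatPart m P emptyPart = P := by
  funext i j
  apply propext
  simp [concatPart, shiftPart, emptyPart]

lemma rmerge_empty (n : ℕ) (R : ℕ → ℕ → Prop) :
    rmergePart 0 n emptyPart R = R := by
  funext i j
  apply propext
  simp [rmergePart, concatPart, shiftPart, emptyPart]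

lemma phi_over (σ τ : PBTree) :
    phi (σ.over_ τ) = concatPart σ.size (phi σ) (phi τ) := by
  induction τ with
  | leaf => exact (concat_empty σ.size (phi σ)).symm
  | node l r ihl ihr =>
      show phi ((σ.over_ l).node r) = _
      show concatPart (σ.over_ l).size (phi (σ.over_ l))
        (rmergePart 1 r.size onePart (phi r)) = _
      rw [size_over, ihl, concat_assoc]
      rfl

lemma phi_under (σ τ : PBTree) :
    phi (σ.under τ) = rmergePart σ.size τ.size (phi σ) (phi τ) := by
  induction σ with
  | leaf => exact (rmerge_empty τ.size (phi τ)).symm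
  | node l r ihl ihr =>
      show phi (l.node (r.under τ)) = _
      show concatPart l.size (phi l)
        (rmergePart 1 (r.under τ).size onePart (phi (r.under τ))) = _
      rw [size_under, ihr]
      exact key l.size r.size τ.size (phi l) (phi r) (phi τ)
        (phi_supp l) (phi_supp r) (phi_refl r) (phi_supp τ) (phi_refl τ)


/-- `φ` turns over- and under-grafting of planar binary trees into
concatenation and right-merging of noncrossing partitions. -/
theorem phi_over_under (σ τ : PBTree) :
    phi (σ.over_ τ) = concatPart σ.size (phi σ) (phi τ) ∧
    phi (σ.under τ) = rmergePart σ.size τ.size (phi σ) (phi τ) := by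
  exact ⟨phi_over σ τ, phi_under σ τ⟩
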